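/- If G is a path graph on n vertices (vertices labeled 0,…,n−1, with i adjacent to i+1), then the category system S = {A_i : 0 ≤ i ≤ n−1} ∪ {B_i : 0 ≤ i ≤ n−1}, where A_i = {0,…,i−1} and B_i = {i+1,…,n−1}, makes (G,S) shattered and internally connected, and memdim(S) = n − 1 = diam(G). -/

import Mathlib

open Finset SimpleGraph

variable {V : Type*}

/-- The set of categories that `x` belongs to. -/
def cat [DecidableEq V] (S : Finset (Finset V)) (x : V) : Finset (Finset V) :=
  S.filter (fun C => x ∈ C)

/-- The category-based distance `d(s,t) = |cat(t) \ cat(s)|`. -/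
def dd [DecidableEq V] (S : Finset (Finset V)) (s t : V) : ℕ :=
  (cat S t \ cat S s).card

/-- `(G, S)` is shattered. -/
def Shattered [DecidableEq V] (G : SimpleGraph V) (S : Finset (Finset V)) : Prop :=
  ∀ s t : V, s ≠ t → ∃ u, G.Adj s u ∧ ∃ C ∈ S, u ∈ C ∧ t ∈ C ∧ s ∉ C

/-- `(G, S)` is internally connected: every category induces a connected subgraph. -/
def InternallyConnected (G : SimpleGraph V) (S : Finset (Finset V)) : Prop :=
  ∀ C ∈ S, (G.induce (C : Set V)).Preconnected

/-- Greedy routing can reach `t` from `s`: there is a path along which the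
category distance to `t` strictly decreases at every step. -/
def RoutesTo [DecidableEq V] (G : SimpleGraph V) (S : Finset (Finset V)) (s t : V) : Prop :=
  Relation.ReflTransGen (fun a b => G.Adj a b ∧ dd S b t < dd S a t) s t

/-- Greedy routing works between all pairs of vertices. -/
def RoutingWorks [DecidableEq V] (G : SimpleGraph V) (S : Finset (Finset V)) : Prop :=
  ∀ s t : V, s ≠ t → RoutesTo G S s t

/-- The membership dimension of a category system. -/
def memdim [DecidableEq V] [Fintype V] (S : Finset (Finset V)) : ℕ :=
  Finset.univ.sup fun u => (cat S u).card


-- reachability in induced interval-closed sets on path graph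
lemma path_reach_interval {n : ℕ} (s : Set (Fin n))
    (hs : ∀ ⦃a b c : Fin n⦄, a ∈ s → c ∈ s → a ≤ b → b ≤ c → b ∈ s) :
    ((pathGraph n).induce s).Preconnected := by
  suffices aux : ∀ k (x y : Fin n) (hx : x ∈ s) (hy : y ∈ s), y.val = x.val + k →
      ((pathGraph n).induce s).Reachable ⟨x, hx⟩ ⟨y, hy⟩ by
    rintro ⟨x, hx⟩ ⟨y, hy⟩
    rcases le_total x.val y.val with h | h
    · exact aux (y.val - x.val) x y hx hy (by omega)
    · exact (aux (x.val - y.val) y x hy hx (by omega)).symm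
  intro k
  induction k with
  | zero =>
    intro x y hx hy h
    have : x = y := Fin.ext (by omega)
    subst this
    rfl
  | succ k ih =>
    intro x y hx hy h
    have hlt : x.val + 1 < n := by omega
    have hz : (⟨x.val + 1, hlt⟩ : Fin n) ∈ s :=
      hs hx hy (by simp [Fin.le_def]; try omega) (by simp [Fin.le_def]; try omega)
    have hadj : ((pathGraph n).induce s).Adj ⟨x, hx⟩ ⟨⟨x.val + 1, hlt⟩, hz⟩ := by
      show (pathGraph n).Adj x ⟨x.val + 1, hlt⟩
      exact pathGraph_adj.mpr (Or.inl rfl)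
    exact hadj.reachable.trans (ih _ y hz hy (by simp; omega))

-- every walk in pathGraph has length at least the value difference
lemma path_walk_length {n : ℕ} {u v : Fin n} (p : (pathGraph n).Walk u v) :
    v.val ≤ u.val + p.length ∧ u.val ≤ v.val + p.length := by
  induction p with
  | nil => simp
  | cons h q ih =>
    rw [pathGraph_adj] at h
    simp only [SimpleGraph.Walk.length_cons]
    omega

lemma path_edist_le {n : ℕ} (u v : Fin n) (huv : u.val ≤ v.val) :
    (pathGraph n).edist u v ≤ (v.val - u.val : ℕ) := by
  suffices aux : ∀ k (x y : Fin n), y.val = x.val + k → (pathGraph n).edist x y ≤ (k : ℕ∞) by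
    exact aux (v.val - u.val) u v (by omega)
  intro k
  induction k with
  | zero =>
    intro x y h
    have : x = y := Fin.ext (by omega)
    subst this
    simp
  | succ k ih =>
    intro x y h
    have hlt : x.val + 1 < n := by omega
    have h1 : (pathGraph n).edist x ⟨x.val + 1, hlt⟩ = 1 :=
      edist_eq_one_iff_adj.mpr (pathGraph_adj.mpr (Or.inl rfl))
    calc (pathGraph n).edist x y
        ≤ (pathGraph n).edist x ⟨x.val + 1, hlt⟩ + (pathGraph n).edist ⟨x.val + 1, hlt⟩ y :=
          SimpleGraph.edist_triangle
      _ ≤ 1 + (k : ℕ∞) := by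
          rw [h1]; gcongr; exact ih _ y (by simp; omega)
      _ = ((k+1 : ℕ) : ℕ∞) := by push_cast; ring

/-- On the path graph with vertices `0, …, n-1`, the category system
consisting of the sets `A i = {0,…,i-1}` and `B i = {i+1,…,n-1}` is shattered and
internally connected, and its membership dimension equals `n - 1 = diam(G)`. -/
theorem path_graph_categories (n : ℕ) (hn : 2 ≤ n) :
    let A : Fin n → Finset (Fin n) := fun i => Finset.univ.filter (fun j => j < i)
    let B : Fin n → Finset (Fin n) := fun i => Finset.univ.filter (fun j => i < j)
    let S : Finset (Finset (Fin n)) := (Finset.univ.image A) ∪ (Finset.univ.image B)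
    Shattered (pathGraph n) S ∧ InternallyConnected (pathGraph n) S ∧
      memdim S = n - 1 ∧ (pathGraph n).diam = n - 1 := by

  intro A B S
  have hA : ∀ (i j : Fin n), j ∈ A i ↔ j.val < i.val := by
    intro i j
    show j ∈ Finset.univ.filter (fun j => j < i) ↔ _
    simp
  have hB : ∀ (i j : Fin n), j ∈ B i ↔ i.val < j.val := by
    intro i j
    show j ∈ Finset.univ.filter (fun j => i < j) ↔ _
    simp
  refine ⟨?_, ?_, ?_, ?_⟩
  · -- Shattered
    intro s t hst
    have hst' : s.val ≠ t.val := fun h => hst (Fin.ext h)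
    rcases Nat.lt_or_ge s.val t.val with h | h
    · refine ⟨⟨s.val + 1, by omega⟩, pathGraph_adj.mpr (Or.inl rfl), B s, ?_, ?_, ?_, ?_⟩
      · exact Finset.mem_union_right _ (Finset.mem_image_of_mem B (Finset.mem_univ s))
      · rw [hB]; show s.val < s.val + 1; omega
      · rw [hB]; omega
      · rw [hB]; omega
    · have h' : t.val < s.val := by omega
      refine ⟨⟨s.val - 1, by omega⟩,
        pathGraph_adj.mpr (Or.inr (show s.val - 1 + 1 = s.val by omega)), A s, ?_, ?_, ?_, ?_⟩
      · exact Finset.mem_union_left _ (Finset.mem_image_of_mem A (Finset.mem_univ s))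
      · rw [hA]; show s.val - 1 < s.val; omega
      · rw [hA]; omega
      · rw [hA]; omega
  · -- InternallyConnected
    intro C hC
    rw [Finset.mem_union] at hC
    rcases hC with h | h <;> obtain ⟨i, -, rfl⟩ := Finset.mem_image.mp h
    · apply path_reach_interval
      intro a b c ha hc hab hbc
      simp only [Finset.mem_coe] at *
      rw [hA] at *
      rw [Fin.le_def] at hbc; omega
    · apply path_reach_interval
      intro a b c ha hc hab hbc
      simp only [Finset.mem_coe] at *
      rw [hB] at *
      rw [Fin.le_def] at hab; omega
  · -- memdim
    show Finset.univ.sup (fun u => (S.filter (fun C => u ∈ C)).card) = n - 1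
    have hAinj : Function.Injective A := by
      intro i j hij
      by_contra hne
      rcases lt_or_gt_of_ne hne with h | h
      · have h1 : i ∈ A j := (hA j i).mpr h
        rw [← hij, hA] at h1; omega
      · have h1 : j ∈ A i := (hA i j).mpr h
        rw [hij, hA] at h1; omega
    have hBinj : Function.Injective B := by
      intro i j hij
      by_contra hne
      rcases lt_or_gt_of_ne hne with h | h
      · have h1 : j ∈ B i := (hB i j).mpr h
        rw [hij, hB] at h1; omega
      · have h1 : i ∈ B j := (hB j i).mpr h
        rw [← hij, hB] at h1; omega
    have hcard : ∀ u : Fin n, (S.filter (fun C => u ∈ C)).card = n - 1 := by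
      intro u
      have step1 : S.filter (fun C => u ∈ C) =
          (Finset.univ.filter (fun i => u < i)).image A ∪
          (Finset.univ.filter (fun i => i < u)).image B := by
        show (Finset.univ.image A ∪ Finset.univ.image B).filter _ = _
        rw [Finset.filter_union, Finset.filter_image, Finset.filter_image]
        congr 1
        · congr 1; apply Finset.filter_congr; intro i _
          simp only [hA, Fin.lt_def, eq_iff_iff]
        · congr 1; apply Finset.filter_congr; intro i _
          simp only [hB, Fin.lt_def, eq_iff_iff]
      rw [step1, Finset.card_union_of_disjoint, Finset.card_image_of_injective _ hAinj,
        Finset.card_image_of_injective _ hBinj]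
      · have e1 : Finset.univ.filter (fun i => u < i) = Finset.Ioi u := by ext; simp
        have e2 : Finset.univ.filter (fun i => i < u) = Finset.Iio u := by ext; simp
        rw [e1, e2, Fin.card_Ioi, Fin.card_Iio]
        omega
      · rw [Finset.disjoint_left]
        rintro C hC1 hC2
        obtain ⟨i, hi, rfl⟩ := Finset.mem_image.mp hC1
        obtain ⟨j, hj, hBA⟩ := Finset.mem_image.mp hC2
        simp only [Finset.mem_filter, Fin.lt_def] at hi hj
        have hv0 : ((⟨0, by omega⟩ : Fin n)).val = 0 := rfl
        have h0 : (⟨0, by omega⟩ : Fin n) ∈ A i := (hA i _).mpr (by omega)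
        rw [← hBA, hB] at h0
        omega
    calc Finset.univ.sup (fun u => (S.filter (fun C => u ∈ C)).card)
        = Finset.univ.sup (fun _ : Fin n => n - 1) := by
          apply Finset.sup_congr rfl; intro u _; exact hcard u
      _ = n - 1 := Finset.sup_const ⟨⟨0, by omega⟩, Finset.mem_univ _⟩ _
  · -- diam
    have hub : (pathGraph n).ediam ≤ ((n - 1 : ℕ) : ℕ∞) := by
      apply ediam_le_of_edist_le
      intro u v
      rcases le_total u.val v.val with h | h
      · exact le_trans (path_edist_le u v h)
          (Nat.cast_le.mpr (show v.val - u.val ≤ n - 1 by omega))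
      · rw [SimpleGraph.edist_comm]
        exact le_trans (path_edist_le v u h)
          (Nat.cast_le.mpr (show u.val - v.val ≤ n - 1 by omega))
    have hne : (pathGraph n).ediam ≠ ⊤ :=
      fun h => by rw [h] at hub; exact (ENat.coe_ne_top _) (top_le_iff.mp hub)
    have hreach : (pathGraph n).Reachable ⟨0, by omega⟩ ⟨n - 1, by omega⟩ :=
      pathGraph_preconnected n _ _
    obtain ⟨p, hp⟩ := hreach.exists_walk_length_eq_dist
    have hlen := path_walk_length p
    have hd : n - 1 ≤ (pathGraph n).dist ⟨0, by omega⟩ ⟨n - 1, by omega⟩ := by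
      simp only at hlen; omega
    have hdle := dist_le_diam (G := pathGraph n) hne
      (u := (⟨0, by omega⟩ : Fin n)) (v := ⟨n - 1, by omega⟩)
    have hdiamle : (pathGraph n).diam ≤ n - 1 := by
      have := ENat.toNat_le_toNat hub (ENat.coe_ne_top _)
      rw [ENat.toNat_coe] at this
      simpa [SimpleGraph.diam] using this
    omega
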